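/- For every k ≥ 0, p_k < p_*, where p_* is the smallest root of B_{r,s}(p) − 2p + 1 = 0 in (0,1]. -/

import Mathlib

/-- `B r s p = ∑_{i=0}^{s-1} C(r,i) p^{r-i} (1-p)^i`, the probability that a
Binomial(r,p) random variable exceeds `r - s`. -/
noncomputable def B (r s : ℕ) (p : ℝ) : ℝ :=
  ∑ i ∈ Finset.range s, (r.choose i : ℝ) * p ^ (r - i) * (1 - p) ^ i

/-- `f k (x, p) = (k+1) B_{r,s}(p) - k B_{r,s}(x) - 2x + 1`. -/
noncomputable def f (r s k : ℕ) (x p : ℝ) : ℝ :=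
  ((k : ℝ) + 1) * B r s p - (k : ℝ) * B r s x - 2 * x + 1

noncomputable def vAux (r : ℕ) (x : ℝ) : ℕ → ℝ
  | 0 => 0
  | i + 1 => (r : ℝ) * ((r - 1).choose i : ℝ) * x ^ (r - 1 - i) * (1 - x) ^ i

lemma B_hasDerivAt (r s : ℕ) (hs : 1 ≤ s) (hrs : s ≤ r) (x : ℝ) :
    HasDerivAt (B r s)
      ((r : ℝ) * ((r - 1).choose (s - 1) : ℝ) * x ^ (r - s) * (1 - x) ^ (s - 1)) x := by
  have key : ∀ i ∈ Finset.range s,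
      HasDerivAt (fun p : ℝ => (r.choose i : ℝ) * p ^ (r - i) * (1 - p) ^ i)
        (vAux r x (i + 1) - vAux r x i) x := by
    intro i hi
    have hi' : i < s := Finset.mem_range.mp hi
    have h1 : HasDerivAt (fun p : ℝ => p ^ (r - i)) (((r - i : ℕ) : ℝ) * x ^ (r - i - 1)) x :=
      hasDerivAt_pow _ x
    have h2 : HasDerivAt (fun p : ℝ => (1 - p) ^ i) (-((i : ℝ) * (1 - x) ^ (i - 1))) x := by
      have hsub : HasDerivAt (fun p : ℝ => 1 - p) (-1) x := (hasDerivAt_id x).const_sub 1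
      have := (hasDerivAt_pow i (1 - x)).comp x hsub
      simpa [Function.comp_def] using this
    have h3 := (h1.mul h2).const_mul (r.choose i : ℝ)
    have h4 : HasDerivAt (fun p : ℝ => (r.choose i : ℝ) * p ^ (r - i) * (1 - p) ^ i)
        ((r.choose i : ℝ) * (((r - i : ℕ) : ℝ) * x ^ (r - i - 1) * (1 - x) ^ i +
          x ^ (r - i) * -((i : ℝ) * (1 - x) ^ (i - 1)))) x := by
      simpa [mul_assoc] using h3
    convert h4 using 1
    rcases i with _ | j
    · simp [vAux]
    · -- i = j + 1
      have hr1 : r - 1 + 1 = r := by omega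
      have c1 : r.choose (j + 1) * (r - (j + 1)) = r * (r - 1).choose (j + 1) := by
        have e1 := Nat.choose_succ_right_eq r (j + 1)
        have e2 := Nat.add_one_mul_choose_eq (r - 1) (j + 1)
        simp only [Nat.succ_eq_add_one, hr1] at e2
        rw [← e1]
        exact e2.symm
      have c2 : r.choose (j + 1) * (j + 1) = r * (r - 1).choose j := by
        have e2 := Nat.add_one_mul_choose_eq (r - 1) j
        simp only [Nat.succ_eq_add_one, hr1] at e2
        exact e2.symm
      simp only [vAux, Nat.add_sub_cancel]
      have e3 : r - 1 - (j + 1) = r - (j + 1) - 1 := by omega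
      have e4 : r - 1 - j = r - (j + 1) := by omega
      have ec1 : ((r.choose (j + 1)) : ℝ) * ((r - (j + 1) : ℕ) : ℝ)
          = (r : ℝ) * (((r - 1).choose (j + 1) : ℕ) : ℝ) := by exact_mod_cast congrArg Nat.cast c1
      have ec2 : ((r.choose (j + 1)) : ℝ) * (((j + 1 : ℕ)) : ℝ)
          = (r : ℝ) * (((r - 1).choose j : ℕ) : ℝ) := by exact_mod_cast congrArg Nat.cast c2
      rw [e3, e4]
      have hxp : x ^ (r - (j + 1)) = x ^ (r - (j + 1) - 1) * x := by
        rw [← pow_succ]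
        congr 1
        omega
      rw [hxp]
      push_cast at ec1 ec2 ⊢
      linear_combination (x * x ^ (r - (j + 1) - 1) * (1 - x) ^ j) * ec2
        - (x ^ (r - (j + 1) - 1) * (1 - x) ^ (j + 1)) * ec1
  have hsum := HasDerivAt.fun_sum key
  rw [Finset.sum_range_sub (vAux r x)] at hsum
  have hv : vAux r x s - vAux r x 0
      = (r : ℝ) * ((r - 1).choose (s - 1) : ℝ) * x ^ (r - s) * (1 - x) ^ (s - 1) := by
    obtain ⟨t, rfl⟩ : ∃ t, s = t + 1 := ⟨s - 1, by omega⟩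
    simp only [vAux, Nat.add_sub_cancel, sub_zero]
    rw [show r - 1 - t = r - (t + 1) from by omega]
  rw [hv] at hsum
  exact hsum

lemma B_strictMonoOn (r s : ℕ) (hs : 1 ≤ s) (hrs : s ≤ r) :
    StrictMonoOn (B r s) (Set.Icc 0 1) := by
  apply strictMonoOn_of_deriv_pos (convex_Icc 0 1)
  · apply Continuous.continuousOn
    unfold B
    fun_prop
  · intro x hx
    rw [interior_Icc] at hx
    rw [(B_hasDerivAt r s hs hrs x).deriv]
    have hr : 0 < r := by omega
    have hc : 0 < (r - 1).choose (s - 1) := Nat.choose_pos (by omega)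
    have hx1 : (0 : ℝ) < x := hx.1
    have hx2 : (0 : ℝ) < 1 - x := by linarith [hx.2]
    positivity

/-- For every `k ≥ 0`, `p_k < p_*`, where `p_*` is the smallest root of
`B_{r,s}(p) - 2p + 1 = 0` in `(0,1]`. -/
theorem stmt_2 (r s : ℕ) (hs : 1 ≤ s) (hrs : s ≤ r) (p : ℕ → ℝ)
    (hp0 : p 0 = 0)
    (hp : ∀ k, 1 ≤ k → p k ∈ Set.Ioo (0 : ℝ) 1 ∧ f r s k (p k) (p (k - 1)) = 0)
    (pstar : ℝ)
    (hpstar : IsLeast {q : ℝ | q ∈ Set.Ioc (0 : ℝ) 1 ∧ B r s q - 2 * q + 1 = 0} pstar) :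
    ∀ k : ℕ, p k < pstar := by
  have hstar_mem : pstar ∈ Set.Ioc (0 : ℝ) 1 := hpstar.1.1
  have hstar_eq : B r s pstar - 2 * pstar + 1 = 0 := hpstar.1.2
  have hB := B_strictMonoOn r s hs hrs
  have hstarIcc : pstar ∈ Set.Icc (0 : ℝ) 1 := ⟨hstar_mem.1.le, hstar_mem.2⟩
  intro k
  induction k with
  | zero => rw [hp0]; exact hstar_mem.1
  | succ k ih =>
    obtain ⟨hmem, heq⟩ := hp (k + 1) (by omega)
    simp only [Nat.add_sub_cancel] at heq
    unfold f at heq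
    by_contra hcon
    push_neg at hcon
    have hpk01 : p k ∈ Set.Icc (0 : ℝ) 1 := by
      rcases Nat.eq_zero_or_pos k with h0 | h1
      · subst h0; rw [hp0]; exact ⟨le_refl 0, zero_le_one⟩
      · exact ⟨(hp k h1).1.1.le, (hp k h1).1.2.le⟩
    have hpk1Icc : p (k + 1) ∈ Set.Icc (0 : ℝ) 1 := ⟨hmem.1.le, hmem.2.le⟩
    have h1 : B r s (p k) < B r s pstar := hB hpk01 hstarIcc ih
    have h2 : B r s pstar ≤ B r s (p (k + 1)) := hB.monotoneOn hstarIcc hpk1Icc hcon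
    have hk0 : (0 : ℝ) ≤ (k : ℝ) + 1 := by positivity
    have hk2 : (0 : ℝ) < (k : ℝ) + 2 := by positivity
    have t1 := mul_le_mul_of_nonneg_left h2 hk0
    have t2 := mul_lt_mul_of_pos_left h1 hk2
    push_cast at heq
    linarith [t1, t2, heq, hstar_eq, hcon]
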